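/- Let Ẽ be a convex functional on a Banach space E dominated by a sublinear functional Ê, with Ẽ(0)=0, and let X_n → X in E. Suppose L_n are continuous linear functionals with L_n ≤ Ê, L_n(X_n) − α(L_n) = Ẽ(X_n) for each n, and L_n converges pointwise to a continuous linear functional L with L ≤ Ê. Then L(X) − α(L) = Ẽ(X). -/

import Mathlib

open Filter

/-- Stability of maximizers: if `Xₙ → X`, `Lₙ ≤ Ê` attains `Ẽ Xₙ = Lₙ Xₙ - α Lₙ`, and
`Lₙ → L` pointwise with `L ≤ Ê`, then `L` attains the representation for `X`:
`L X - α L = Ẽ X`. -/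
theorem maximizer_limit_attains
    (E : Type*) [NormedAddCommGroup E] [NormedSpace ℝ E] [CompleteSpace E]
    (Ehat : E → ℝ) (Etil : E → ℝ)
    (hEhat_cont : Continuous Ehat)
    (hEhat_subadd : ∀ x y : E, Ehat (x + y) ≤ Ehat x + Ehat y)
    (hEhat_hom : ∀ (c : ℝ), 0 ≤ c → ∀ x : E, Ehat (c • x) = c * Ehat x)
    (hconv : ConvexOn ℝ Set.univ Etil)
    (hzero : Etil 0 = 0)
    (hdom : ∀ X₁ X₂ : E, Etil X₁ - Etil X₂ ≤ Ehat (X₁ - X₂))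
    (α : (E →L[ℝ] ℝ) → EReal)
    (hα : ∀ L : E →L[ℝ] ℝ, α L = ⨆ Y : E, ((L Y - Etil Y : ℝ) : EReal))
    (Xn : ℕ → E) (X : E) (hX : Tendsto Xn atTop (nhds X))
    (Ln : ℕ → E →L[ℝ] ℝ) (L : E →L[ℝ] ℝ)
    (hLn_dom : ∀ n, ∀ Y : E, Ln n Y ≤ Ehat Y)
    (hLn_attain : ∀ n, ((Ln n (Xn n) : ℝ) : EReal) - α (Ln n) = ((Etil (Xn n) : ℝ) : EReal))
    (hL_dom : ∀ Y : E, L Y ≤ Ehat Y)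
    (hptwise : ∀ Y : E, Tendsto (fun n => Ln n Y) atTop (nhds (L Y))) :
    ((L X : ℝ) : EReal) - α L = ((Etil X : ℝ) : EReal) := by
  have hEhat0 : Ehat 0 = 0 := by simpa using hEhat_hom 0 le_rfl 0
  -- α (Ln n) is finite and equals the attained value
  have hαn : ∀ n, α (Ln n) = ((Ln n (Xn n) - Etil (Xn n) : ℝ) : EReal) := by
    intro n
    have h := hLn_attain n
    have hne_top : α (Ln n) ≠ ⊤ := by
      intro htop; rw [htop] at h; simp at h
    have hne_bot : α (Ln n) ≠ ⊥ := by
      intro hbot; rw [hbot] at h; simp at h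
    have hco : ((α (Ln n)).toReal : EReal) = α (Ln n) := EReal.coe_toReal hne_top hne_bot
    rw [← hco, ← EReal.coe_sub] at h
    have h' : Ln n (Xn n) - (α (Ln n)).toReal = Etil (Xn n) := by exact_mod_cast h
    rw [← hco]
    congr 1
    linarith
  -- convergence of Ehat along the differences
  have h1 : Tendsto (fun n => Ehat (Xn n - X)) atTop (nhds 0) := by
    have := (hEhat_cont.tendsto 0).comp
      (by simpa using (hX.sub_const X) : Tendsto (fun n => Xn n - X) atTop (nhds 0))
    simpa [hEhat0, Function.comp_def] using this
  have h2 : Tendsto (fun n => Ehat (X - Xn n)) atTop (nhds 0) := by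
    have := (hEhat_cont.tendsto 0).comp
      (by simpa using ((tendsto_const_nhds (x := X)).sub hX) : Tendsto (fun n => X - Xn n) atTop (nhds 0))
    simpa [hEhat0, Function.comp_def] using this
  -- Ln n (Xn n) → L X
  have hf : Tendsto (fun n => Ln n (Xn n - X)) atTop (nhds 0) := by
    apply tendsto_of_tendsto_of_tendsto_of_le_of_le (by simpa using h2.neg) h1
    · intro n
      show -Ehat (X - Xn n) ≤ Ln n (Xn n - X)
      have hb := hLn_dom n (X - Xn n)
      have : Ln n (X - Xn n) = -(Ln n (Xn n - X)) := by
        rw [map_sub, map_sub]; ring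
      linarith
    · intro n; exact hLn_dom n (Xn n - X)
  have hLXn : Tendsto (fun n => Ln n (Xn n)) atTop (nhds (L X)) := by
    have := hf.add (hptwise X)
    simpa [map_sub, sub_add_cancel] using this
  -- Etil (Xn n) → Etil X
  have hEtilXn : Tendsto (fun n => Etil (Xn n)) atTop (nhds (Etil X)) := by
    apply tendsto_of_tendsto_of_tendsto_of_le_of_le
      (g := fun n => Etil X - Ehat (X - Xn n)) (h := fun n => Etil X + Ehat (Xn n - X))
    · simpa using (tendsto_const_nhds.sub h2)
    · simpa using (tendsto_const_nhds.add h1)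
    · intro n; show Etil X - Ehat (X - Xn n) ≤ Etil (Xn n)
      have := hdom X (Xn n); linarith
    · intro n; show Etil (Xn n) ≤ Etil X + Ehat (Xn n - X)
      have := hdom (Xn n) X; linarith
  -- key inequality
  have key : ∀ Y, L Y - Etil Y ≤ L X - Etil X := by
    intro Y
    have hineq : ∀ n, Ln n Y - Etil Y ≤ Ln n (Xn n) - Etil (Xn n) := by
      intro n
      have h1 : ((Ln n Y - Etil Y : ℝ) : EReal) ≤ α (Ln n) := by
        rw [hα]; exact le_iSup (fun Y => ((Ln n Y - Etil Y : ℝ) : EReal)) Y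
      rw [hαn n] at h1
      exact_mod_cast h1
    exact le_of_tendsto_of_tendsto' ((hptwise Y).sub tendsto_const_nhds)
      (hLXn.sub hEtilXn) hineq
  have hαL : α L = ((L X - Etil X : ℝ) : EReal) := by
    rw [hα]
    apply le_antisymm
    · exact iSup_le fun Y => EReal.coe_le_coe_iff.mpr (key Y)
    · exact le_iSup (fun Y => ((L Y - Etil Y : ℝ) : EReal)) X
  rw [hαL, ← EReal.coe_sub, sub_sub_cancel]
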